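/- Let p and r be distinct primes and a, t positive integers with (r-1) dividing a. Then r^t divides Ψ_{r^t}(p^a) = (p^{a r^t} - 1)/(p^a - 1). -/
import Mathlib

lemma geom_split (x m n : ℕ) :
    ∑ i ∈ Finset.range (m * n), x ^ i =
      (∑ i ∈ Finset.range m, x ^ i) * ∑ j ∈ Finset.range n, (x ^ m) ^ j := by
  induction n with
  | zero => simp
  | succ n ih =>
    rw [Nat.mul_succ, Finset.sum_range_add, ih, Finset.sum_range_succ, mul_add]
    congr 1
    rw [Finset.sum_mul]
    exact Finset.sum_congr rfl fun i _ => by rw [← pow_mul, ← pow_add, Nat.add_comm]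

/-- For distinct primes `p ≠ r` and `a, t ≥ 1` with `(r-1) ∣ a`:
`r^t ∣ Ψ_{r^t}(p^a)`. -/
theorem prime_pow_dvd_psi_prime_pow (p r : ℕ) (hp : p.Prime) (hr : r.Prime)
    (hne : p ≠ r) (a t : ℕ) (ha : 0 < a) (ht : 0 < t) (hdvd : (r - 1) ∣ a) :
    r ^ t ∣ ∑ i ∈ Finset.range (r ^ t), (p ^ a) ^ i := by
  have hq1 : ((p : ZMod r) ^ a) = 1 := by
    obtain ⟨k, rfl⟩ := hdvd
    have hpne : (p : ZMod r) ≠ 0 := by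
      haveI : Fact r.Prime := ⟨hr⟩
      rw [Ne, ZMod.natCast_eq_zero_iff]
      intro h
      exact hne ((Nat.prime_dvd_prime_iff_eq hr hp).mp h).symm
    haveI : Fact r.Prime := ⟨hr⟩
    rw [pow_mul, ZMod.pow_card_sub_one_eq_one hpne, one_pow]
  -- key: r divides ∑_{j<r} y^j whenever (y : ZMod r) = 1
  have key : ∀ y : ℕ, ((y : ZMod r) = 1) → r ∣ ∑ j ∈ Finset.range r, y ^ j := by
    intro y hy
    rw [← ZMod.natCast_eq_zero_iff]
    push_cast
    simp [hy, ZMod.natCast_self]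
  clear ht
  induction t with
  | zero => simp
  | succ t ih =>
    rw [pow_succ, geom_split]
    refine mul_dvd_mul ih (key _ ?_)
    push_cast
    rw [hq1, one_pow]
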